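/- Let Cay(G,S) be a connected quintic Cayley graph on a finite abelian group with S = {s, -s, s', -s', s₀}, s₀ an involution, o(s), o(s') > 2, admitting a perfect code D with a ∈ {-1,1} such that g + a·s + s' + s₀ ∈ D for all g ∈ D. Suppose h·s + l·s' = 0 where both h and l are odd, 0 ≤ h ≤ o(s), 0 ≤ l ≤ o(s'). Then the 2-adic valuation of o(s) and the 2-adic valuation of o(s') are both strictly greater than the 2-adic valuation of l - a·h. -/

import Mathlib

/-- The Cayley graph of an additive group `G` with connection set `S`. -/
def cayley (G : Type*) [AddGroup G] (S : Set G) : SimpleGraph G where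
  Adj x y := x ≠ y ∧ (y - x ∈ S ∨ x - y ∈ S)
  symm := by
    refine ⟨?_⟩
    rintro x y ⟨h1, h2⟩
    exact ⟨h1.symm, h2.symm⟩
  loopless := by
    refine ⟨?_⟩
    rintro x ⟨h1, -⟩
    exact h1 rfl

/-- A perfect code of a graph: every vertex is at distance at most one
from exactly one vertex of `D`. -/
def IsPerfectCode {V : Type*} (Γ : SimpleGraph V) (D : Set V) : Prop :=
  ∀ v : V, ∃! c : V, c ∈ D ∧ (v = c ∨ Γ.Adj v c)

/-- The generating relation of the graph `Γ_{m,l,h}`. -/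
def gammaRel (m l h : ℕ) (p q : ZMod m × ZMod l) : Prop :=
  (q.1 = p.1 + 1 ∧ q.2 = p.2) ∨
  (q.1 = p.1 ∧ p.2.val ≠ l - 1 ∧ q.2 = p.2 + 1) ∨
  (p.2.val = l - 1 ∧ q.1 = p.1 - (h : ZMod m) ∧ q.2 = 0)

/-- The graph `Γ_{m,l,h}` of Construction 2.1. -/
def Gamma (m l h : ℕ) : SimpleGraph (ZMod m × ZMod l) where
  Adj p q := p ≠ q ∧ (gammaRel m l h p q ∨ gammaRel m l h q p)
  symm := by
    refine ⟨?_⟩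
    rintro p q ⟨h1, h2⟩
    exact ⟨h1.symm, h2.symm⟩
  loopless := by
    refine ⟨?_⟩
    rintro p ⟨h1, -⟩
    exact h1 rfl

/-- `tau n m` is the minimal positive divisor `j` of `m` with `gcd (n, m/j) = 1`. -/
noncomputable def tau (n m : ℕ) : ℕ := sInf {j : ℕ | 0 < j ∧ j ∣ m ∧ Nat.gcd n (m / j) = 1}

/-- The graph `Γ'_{m,l,h}` of Construction 2.4. -/
def Gamma' (m l h : ℕ) : SimpleGraph (ZMod m × ZMod l) where
  Adj p q := p ≠ q ∧ (gammaRel m l h p q ∨ gammaRel m l h q p ∨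
    (q.1 = p.1 + ((m / 2 : ℕ) : ZMod m) ∧ q.2 = p.2) ∨
    (p.1 = q.1 + ((m / 2 : ℕ) : ZMod m) ∧ p.2 = q.2))
  symm := by
    refine ⟨?_⟩
    rintro p q ⟨h1, h2⟩
    exact ⟨h1.symm, by tauto⟩
  loopless := by
    refine ⟨?_⟩
    rintro p ⟨h1, -⟩
    exact h1 rfl

/-- The graph `Γ''_{m,l,h}` of Construction 2.7. -/
def Gamma'' (m l h : ℕ) : SimpleGraph (ZMod m × ZMod l) where
  Adj p q := p ≠ q ∧ (gammaRel m l h p q ∨ gammaRel m l h q p ∨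
    (q.1 = p.1 + (((m + h - Nat.lcm h m : ℤ) / 2 : ℤ) : ZMod m) ∧
      p.2 = q.2 + ((l / 2 : ℕ) : ZMod l)) ∨
    (p.1 = q.1 + (((m + h - Nat.lcm h m : ℤ) / 2 : ℤ) : ZMod m) ∧
      q.2 = p.2 + ((l / 2 : ℕ) : ZMod l)))
  symm := by
    refine ⟨?_⟩
    rintro p q ⟨h1, h2⟩
    exact ⟨h1.symm, by tauto⟩
  loopless := by
    refine ⟨?_⟩
    rintro p ⟨h1, -⟩
    exact h1 rfl

/-- `sigma2 n` is the 2-adic valuation of the natural number `n`. -/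
def sigma2 (n : ℕ) : ℕ := padicValNat 2 n

/-- `sigma2Z n` is the 2-adic valuation of the integer `n`. -/
def sigma2Z (n : ℤ) : ℕ := padicValInt 2 n

lemma natAbs_smul_zero_iff {G : Type*} [AddCommGroup G] (z : ℤ) (x : G) :
    z.natAbs • x = 0 ↔ z • x = 0 := by
  have h1 : ((z.natAbs : ℤ)) • x = z.natAbs • x := natCast_zsmul x z.natAbs
  rcases Int.natAbs_eq z with hz | hz
  · constructor <;> intro hh
    · rw [hz, h1, hh]
    · rw [← h1, ← hz, hh]
  · constructor <;> intro hh
    · rw [hz, neg_zsmul, h1, hh, neg_zero]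
    · have : (-(z.natAbs : ℤ)) • x = 0 := by rw [← hz, hh]
      rw [neg_zsmul, neg_eq_zero, h1] at this
      exact this

lemma key_lemma {G : Type*} [AddCommGroup G] (x u : G) (w n : ℤ)
    (hm : 0 < addOrderOf x)
    (hw : Odd w) (hwu : w • u = n • x)
    (hdvd : padicValNat 2 (addOrderOf x) ≤ padicValNat 2 n.natAbs) :
    ∃ N : ℕ, Odd N ∧ N • u = 0 := by
  haveI : Fact (Nat.Prime 2) := ⟨Nat.prime_two⟩
  set m := addOrderOf x with hmdef
  set g := Nat.gcd m n.natAbs with hgdef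
  set c := m / g with hcdef
  have hgm : g ∣ m := Nat.gcd_dvd_left _ _
  have hmgc : m = g * c := (Nat.div_mul_cancel hgm).symm.trans (mul_comm _ _)
  have h2g : 2 ^ padicValNat 2 m ∣ g := by
    apply Nat.dvd_gcd pow_padicValNat_dvd
    rcases eq_or_ne n.natAbs 0 with h0 | h0
    · simp [h0]
    · exact dvd_trans (pow_dvd_pow 2 hdvd) pow_padicValNat_dvd
  have hcodd : Odd c := by
    rcases Nat.even_or_odd c with he | ho
    · exfalso
      obtain ⟨c', hc'⟩ := he
      have h2c : 2 ∣ c := ⟨c', by omega⟩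
      have : 2 ^ (padicValNat 2 m + 1) ∣ m := by
        obtain ⟨c'', hc''⟩ := h2c
        obtain ⟨g', hg'⟩ := h2g
        refine ⟨g' * c'', ?_⟩
        conv_lhs => rw [hmgc, hc'', hg']
        ring
      exact pow_succ_padicValNat_not_dvd hm.ne' this
    · exact ho
  have hmdvd : m ∣ c * n.natAbs := by
    have hgn : g ∣ n.natAbs := Nat.gcd_dvd_right _ _
    obtain ⟨q, hq⟩ := hgn
    exact ⟨q, by rw [hq, hmgc]; ring⟩
  have h1 : ((c : ℤ) * n) • x = 0 := by
    rw [← natAbs_smul_zero_iff, Int.natAbs_mul, Int.natAbs_natCast]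
    exact addOrderOf_dvd_iff_nsmul_eq_zero.mp hmdvd
  refine ⟨c * w.natAbs, hcodd.mul (Int.natAbs_odd.mpr hw), ?_⟩
  have h2 : ((c : ℤ) * w) • u = 0 := by
    rw [mul_smul, hwu, ← mul_smul, h1]
  have h3 : ((c : ℤ) * w).natAbs • u = 0 := (natAbs_smul_zero_iff _ _).mpr h2
  rwa [Int.natAbs_mul, Int.natAbs_natCast] at h3

lemma code_no_odd {G : Type*} [AddCommGroup G] (s s' s₀ : G)
    (h0 : addOrderOf s₀ = 2)
    (D : Set G)
    (hD : IsPerfectCode (cayley G ({s, -s, s', -s', s₀} : Set G)) D)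
    (a : ℤ)
    (hshift : ∀ g ∈ D, g + a • s + s' + s₀ ∈ D)
    (N : ℕ) (hN : Odd N) (hNu : N • (a • s + s') = 0) : False := by
  have hs₀ne : s₀ ≠ 0 := by
    intro hh
    rw [hh, addOrderOf_zero] at h0
    exact absurd h0 (by norm_num)
  have h2s₀ : (2 : ℕ) • s₀ = 0 :=
    addOrderOf_dvd_iff_nsmul_eq_zero.mp (h0 ▸ dvd_refl _)
  obtain ⟨c, ⟨hc, -⟩, -⟩ := hD 0
  have hiter : ∀ j : ℕ, c + j • (a • s + s' + s₀) ∈ D := by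
    intro j
    induction j with
    | zero => simpa using hc
    | succ j ih =>
      have h2 := hshift _ ih
      have : c + j • (a • s + s' + s₀) + a • s + s' + s₀
          = c + (j + 1) • (a • s + s' + s₀) := by
        rw [succ_nsmul]; abel
      rwa [this] at h2
  have hNt : N • (a • s + s' + s₀) = s₀ := by
    obtain ⟨j, hj⟩ := hN
    have hsplit : N • (a • s + s' + s₀) = N • (a • s + s') + N • s₀ := by
      rw [← smul_add]
    have hNs₀ : N • s₀ = s₀ := by
      rw [hj, add_nsmul, mul_nsmul, h2s₀, smul_zero, one_nsmul, zero_add]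
    rw [hsplit, hNu, hNs₀, zero_add]
  have hmem : c + s₀ ∈ D := by
    have := hiter N
    rwa [hNt] at this
  obtain ⟨y, -, hyuniq⟩ := hD c
  have e1 : c = y := hyuniq c ⟨hc, Or.inl rfl⟩
  have e2 : c + s₀ = y := by
    apply hyuniq
    refine ⟨hmem, Or.inr ?_⟩
    constructor
    · intro hh
      exact hs₀ne (by rwa [left_eq_add] at hh)
    · left
      have : c + s₀ - c = s₀ := by abel
      rw [this]
      simp
  exact hs₀ne (by rw [← e1] at e2; simpa using e2)

theorem stmt6 (G : Type*) [AddCommGroup G] [Fintype G] (s s' s₀ : G)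
    (h5 : ({s, -s, s', -s', s₀} : Set G).ncard = 5)
    (h0 : addOrderOf s₀ = 2) (hs : 2 < addOrderOf s) (hs' : 2 < addOrderOf s')
    (hgen : AddSubgroup.closure ({s, -s, s', -s', s₀} : Set G) = ⊤)
    (D : Set G)
    (hD : IsPerfectCode (cayley G ({s, -s, s', -s', s₀} : Set G)) D)
    (a : ℤ) (ha : a = 1 ∨ a = -1)
    (hshift : ∀ g ∈ D, g + a • s + s' + s₀ ∈ D)
    (h l : ℤ) (hh0 : 0 ≤ h) (hhm : h ≤ (addOrderOf s : ℤ))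
    (hl0 : 0 ≤ l) (hlm : l ≤ (addOrderOf s' : ℤ))
    (hrel : h • s + l • s' = 0)
    (hoh : Odd h) (hol : Odd l) :
    sigma2Z (l - a * h) < sigma2 (addOrderOf s) ∧
      sigma2Z (l - a * h) < sigma2 (addOrderOf s') := by
  have ha2 : a * a = 1 := by rcases ha with rfl | rfl <;> norm_num
  set u : G := a • s + s' with hu
  set k : ℤ := l - a * h with hk
  have hlrel : l • u = (a * k) • s := by
    have h1 : l • s' = (-h) • s := by
      rw [neg_smul]
      exact (neg_eq_of_add_eq_zero_right hrel).symm
    calc l • u = l • (a • s) + l • s' := smul_add l _ _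
      _ = (l * a) • s + (-h) • s := by rw [smul_smul, h1]
      _ = (l * a + -h) • s := (add_smul _ _ _).symm
      _ = (a * k) • s := by
          congr 1
          rw [hk]
          linear_combination h * ha2
  have hhrel : h • u = (-(a * k)) • s' := by
    have h1 : h • s = (-l) • s' := by
      rw [neg_smul]
      exact (neg_eq_of_add_eq_zero_left hrel).symm
    calc h • u = h • (a • s) + h • s' := smul_add h _ _
      _ = a • ((-l) • s') + h • s' := by rw [smul_smul, mul_comm, ← smul_smul, h1]
      _ = (a * -l) • s' + h • s' := by rw [smul_smul]
      _ = (a * -l + h) • s' := (add_smul _ _ _).symm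
      _ = (-(a * k)) • s' := by
          congr 1
          rw [hk]
          linear_combination (-h) * ha2
  have hkabs : ∀ b : ℤ, (b = a * k ∨ b = -(a * k)) →
      padicValNat 2 b.natAbs = sigma2Z k := by
    intro b hb
    have habs : b.natAbs = k.natAbs := by
      rcases hb with rfl | rfl
      · rw [Int.natAbs_mul]
        rcases ha with rfl | rfl <;> simp
      · rw [Int.natAbs_neg, Int.natAbs_mul]
        rcases ha with rfl | rfl <;> simp
    rw [habs]
    rfl
  constructor
  · by_contra hcon
    push_neg at hcon
    obtain ⟨N, hN, hNu⟩ := key_lemma s u l (a * k) (by omega) hol hlrel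
      (by rw [hkabs _ (Or.inl rfl)]; exact hcon)
    exact code_no_odd s s' s₀ h0 D hD a hshift N hN hNu
  · by_contra hcon
    push_neg at hcon
    obtain ⟨N, hN, hNu⟩ := key_lemma s' u h (-(a * k)) (by omega) hoh hhrel
      (by rw [hkabs _ (Or.inr rfl)]; exact hcon)
    exact code_no_odd s s' s₀ h0 D hD a hshift N hN hNu
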